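/- Let G^{A,B} be a biconed graph, T a spanning tree of G^{A,B}, and e a connecting edge of T with connecting vertex v such that the component C of v in T ∖ T_0 contains no connecting vertex other than v. Then e is internally active in T if and only if v is the smallest vertex of C with respect to the fixed vertex order. -/

import Mathlib

/-!
Formalization scaffold for "h-vectors of graphic matroids of biconed graphs".

A graph `G` (loops and parallel edges allowed) with vertex set `A ∪ B` is
modelled by an abstract finite edge type `E` with an endpoint map
`ends : E → Sym2 (Fin m ⊕ₗ Fin n)`, where `A = Fin m = {1,…,m}`,
`Ā = B \ A = Fin n = {1̄,…,n̄}` and the finset `S ⊆ Fin m` records `A ∩ B`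
(so `B = S ∪ Ā`).  The biconing `G^{A,B}` adds the two vertices `0` and `0̄`
and the edges `00̄`, `0a (a ∈ A)` and `0̄b (b ∈ B)`.
-/

namespace BiconedPaper

noncomputable section
open scoped Classical

/-! ### Walks in multigraphs presented by an endpoint map -/

/-- A walk in the multigraph with edge set `ε` and endpoint map `ends`. -/
inductive MWalk {ε ν : Type} (ends : ε → Sym2 ν) : ν → ν → Type
  | nil (u : ν) : MWalk ends u u
  | cons {u w : ν} (e : ε) (v : ν) (h : ends e = s(u, v)) (p : MWalk ends v w) :
      MWalk ends u w

namespace MWalk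

variable {ε ν : Type} {ends : ε → Sym2 ν}

/-- The list of edges traversed by a walk. -/
def edges : ∀ {u v : ν}, MWalk ends u v → List ε
  | _, _, nil _ => []
  | _, _, cons e _ _ p => e :: p.edges

/-- The list of vertices visited by a walk. -/
def support : ∀ {u v : ν}, MWalk ends u v → List ν
  | u, _, nil _ => [u]
  | u, _, cons _ _ _ p => u :: p.support

/-- A walk is a path if it visits no vertex twice. -/
def IsPath {u v : ν} (p : MWalk ends u v) : Prop := p.support.Nodup

/-- All edges of the walk belong to the edge set `F`. -/
def edgesIn {u v : ν} (p : MWalk ends u v) (F : Finset ε) : Prop :=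
  ∀ e ∈ p.edges, e ∈ F

/-- The number of "bridging" edges traversed by a walk, i.e. steps whose two
endpoints lie on different sides according to `sideF`. -/
def bridgeCount (sideF : ν → Bool) : ∀ {u v : ν}, MWalk ends u v → ℕ
  | _, _, nil _ => 0
  | u, _, cons _ v' _ p => (if sideF u = sideF v' then 0 else 1) + p.bridgeCount sideF

end MWalk

/-- `u` and `v` are joined by a walk all of whose edges lie in `F`. -/
def Reachable {ε ν : Type} (ends : ε → Sym2 ν) (F : Finset ε) (u v : ν) : Prop :=
  ∃ p : MWalk ends u v, p.edgesIn F

/-- An edge set is acyclic (a forest) iff removing any one of its edges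
disconnects the endpoints of that edge.  (In particular no loops and no
parallel pairs.) -/
def IsAcyclic {ε ν : Type} [DecidableEq ε] (ends : ε → Sym2 ν) (F : Finset ε) : Prop :=
  ∀ e ∈ F, ∀ u v : ν, ends e = s(u, v) → ¬ Reachable ends (F.erase e) u v

/-- A spanning tree: an acyclic edge set connecting every pair of vertices. -/
def IsSpanningTree {ε ν : Type} [DecidableEq ε] (ends : ε → Sym2 ν) (T : Finset ε) : Prop :=
  IsAcyclic ends T ∧ ∀ u v : ν, Reachable ends T u v

/-! ### Biconed graphs -/

/-- The data of a biconed graph `G^{A,B}`:  the graph `G` has vertex set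
`A ∪ B` with `A = Fin m`, `Ā = B \ A = Fin n`, `A ∩ B = S`, and abstract
edge set `E` (so loops and parallel edges are allowed). -/
structure BiconedGraph where
  m : ℕ
  n : ℕ
  E : Type
  fintypeE : Fintype E
  decEqE : DecidableEq E
  ends : E → Sym2 (Fin m ⊕ₗ Fin n)
  S : Finset (Fin m)

namespace BiconedGraph

variable (P : BiconedGraph)

instance : Fintype P.E := P.fintypeE
instance : DecidableEq P.E := P.decEqE

/-- The vertices of `G`, linearly ordered `1 < ⋯ < m < 1̄ < ⋯ < n̄`. -/
abbrev VG := Fin P.m ⊕ₗ Fin P.n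

/-- The vertices of `G^{A,B}_red`:  `⊥` is the vertex `0̄`, ordered
`0̄ < 1 < ⋯ < m < 1̄ < ⋯ < n̄`. -/
abbrev Vred := WithBot P.VG

/-- The vertices of `G^{A,B}`: `⊥` is `0`, ordered `0 < 0̄ < 1 < ⋯ < n̄`. -/
abbrev W := WithBot P.Vred

/-- The vertex `a ∈ A`. -/
def aVert (a : Fin P.m) : P.VG := toLex (Sum.inl a)
/-- The vertex `b ∈ Ā`. -/
def bVert (b : Fin P.n) : P.VG := toLex (Sum.inr b)
/-- Inclusion of the vertices of `G` into those of `G^{A,B}_red`. -/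
def liftV (x : P.VG) : P.Vred := (x : WithBot P.VG)
/-- Inclusion of the vertices of `G^{A,B}_red` into those of `G^{A,B}`. -/
def liftW (x : P.Vred) : P.W := (x : WithBot P.Vred)

/-- The edges of the biconed graph `G^{A,B}`:  the edge `00̄`, the coning
edges `0a (a ∈ A)`, `0̄b (b ∈ Ā)`, `0̄a (a ∈ A ∩ B)`, and the edges of `G`. -/
abbrev EB := Unit ⊕ (Fin P.m ⊕ (Fin P.n ⊕ ({a : Fin P.m // a ∈ P.S} ⊕ P.E)))

/-- The edge `00̄`. -/
abbrev e00 : P.EB := Sum.inl ()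
/-- The coning edge `0a`, `a ∈ A`. -/
abbrev eA (a : Fin P.m) : P.EB := Sum.inr (Sum.inl a)
/-- The coning edge `0̄b`, `b ∈ Ā`. -/
abbrev eB (b : Fin P.n) : P.EB := Sum.inr (Sum.inr (Sum.inl b))
/-- The coning edge `0̄a`, `a ∈ A ∩ B`. -/
abbrev eS (a : {a : Fin P.m // a ∈ P.S}) : P.EB := Sum.inr (Sum.inr (Sum.inr (Sum.inl a)))
/-- An original edge of `G`. -/
abbrev eG (e : P.E) : P.EB := Sum.inr (Sum.inr (Sum.inr (Sum.inr e)))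

/-- The endpoint map of `G^{A,B}`. -/
def endsB : P.EB → Sym2 P.W
  | Sum.inl _ => s((⊥ : P.W), P.liftW ⊥)
  | Sum.inr (Sum.inl a) => s((⊥ : P.W), P.liftW (P.liftV (P.aVert a)))
  | Sum.inr (Sum.inr (Sum.inl b)) => s(P.liftW ⊥, P.liftW (P.liftV (P.bVert b)))
  | Sum.inr (Sum.inr (Sum.inr (Sum.inl a))) => s(P.liftW ⊥, P.liftW (P.liftV (P.aVert a.1)))
  | Sum.inr (Sum.inr (Sum.inr (Sum.inr e))) => (P.ends e).map fun x => P.liftW (P.liftV x)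

/-- The spanning tree `T₀`, consisting of `00̄`, the edges `0a (a ∈ A)` and
the edges `0̄b (b ∈ Ā)`. -/
def T0 : Finset P.EB :=
  Finset.univ.filter fun e => match e with
    | Sum.inl _ => True
    | Sum.inr (Sum.inl _) => True
    | Sum.inr (Sum.inr (Sum.inl _)) => True
    | _ => False

/-- The edges of `G^{A,B}_red` (delete the edges of `T₀` and the vertex `0`):
the edges `0̄a (a ∈ A ∩ B)` together with the edges of `G`. -/
abbrev Ered := {a : Fin P.m // a ∈ P.S} ⊕ P.E

/-- The endpoint map of `G^{A,B}_red`; `⊥` is the vertex `0̄`. -/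
def endsRed : P.Ered → Sym2 P.Vred
  | Sum.inl a => s((⊥ : P.Vred), P.liftV (P.aVert a.1))
  | Sum.inr e => (P.ends e).map P.liftV

/-- Inclusion of the edges of `G^{A,B}_red` into those of `G^{A,B}`. -/
def redToEB : P.Ered → P.EB
  | Sum.inl a => P.eS a
  | Sum.inr e => P.eG e

/-- The edge set `T \ T₀` of `T`, viewed inside `G^{A,B}_red`. -/
def redOf (T : Finset P.EB) : Finset P.Ered :=
  Finset.univ.filter fun e => P.redToEB e ∈ T

/-- `true` on the vertices of `A`, `false` on the vertices of `Ā ∪ {0̄}`. -/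
def side : P.Vred → Bool :=
  WithBot.recBotCoe false fun x => Sum.elim (fun _ => true) (fun _ => false) (ofLex x)

/-- The vertex lies in `A`. -/
def InA (v : P.Vred) : Prop := ∃ a : Fin P.m, v = P.liftV (P.aVert a)

/-- An edge of `G^{A,B}_red` is bridging if it joins a vertex of `A` to a
vertex of `Ā ∪ {0̄}`. -/
def BridgingE (e : P.Ered) : Prop :=
  ∃ u v : P.Vred, P.endsRed e = s(u, v) ∧ P.side u ≠ P.side v

/-! ### 2-edge-rooted forests -/

/-- The underlying edge set `F` of the multiset of edges given by the
multiplicity function `mult` (an edge `e` carries `mult e - 1` edge roots). -/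
def mSupport (mult : P.Ered → ℕ) : Finset P.Ered :=
  Finset.univ.filter fun e => mult e ≠ 0

/-- The degree of the multiset of edges given by `mult`. -/
def deg (mult : P.Ered → ℕ) : ℕ := ∑ e : P.Ered, mult e

/-- Edge `e` meets the connected component of `v` in the edge set `F`. -/
def Touches (F : Finset P.Ered) (v : P.Vred) (e : P.Ered) : Prop :=
  ∃ u : P.Vred, u ∈ P.endsRed e ∧ Reachable P.endsRed F v u

/-- The total number of edge roots in the component of `v`. -/
def compEdgeRoots (mult : P.Ered → ℕ) (v : P.Vred) : ℕ :=
  ∑ e ∈ P.mSupport mult, if P.Touches (P.mSupport mult) v e then mult e - 1 else 0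

/-- The component of `v` is `compCount`-edge-rooted:  the number of its edge
roots, plus `1` if it contains the vertex `0̄`. -/
def compCount (mult : P.Ered → ℕ) (v : P.Vred) : ℕ :=
  P.compEdgeRoots mult v +
    if Reachable P.endsRed (P.mSupport mult) v (⊥ : P.Vred) then 1 else 0

/-- Condition (C3) for the `2`-edge-rooted component of `v`:  the unique
shortest path containing both edge roots (resp. the vertex `0̄` and the edge
root, if the component contains `0̄`) has an odd number of bridging edges.
The shortest path containing two edges is the unique path whose first and
last edges are the two rooted edges; if the two edge roots lie on one common
edge (`mult e = 3`) the path is that single edge. -/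
def C3At (mult : P.Ered → ℕ) (v : P.Vred) : Prop :=
  (Reachable P.endsRed (P.mSupport mult) v (⊥ : P.Vred) →
    ∃ (x : P.Vred) (p : MWalk P.endsRed (⊥ : P.Vred) x),
      p.IsPath ∧ p.edgesIn (P.mSupport mult) ∧
      (∃ e, p.edges.getLast? = some e ∧ 2 ≤ mult e) ∧
      Odd (p.bridgeCount P.side)) ∧
  (¬ Reachable P.endsRed (P.mSupport mult) v (⊥ : P.Vred) →
    ∃ (x y : P.Vred) (p : MWalk P.endsRed x y),
      p.IsPath ∧ p.edgesIn (P.mSupport mult) ∧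
      Reachable P.endsRed (P.mSupport mult) v x ∧
      (∃ e, p.edges.head? = some e ∧ 2 ≤ mult e) ∧
      (∃ e, p.edges.getLast? = some e ∧ 2 ≤ mult e) ∧
      (∀ e, p.edges = [e] → mult e = 3) ∧
      Odd (p.bridgeCount P.side))

/-- `mult : Ered → ℕ` is (the multiplicity function of) a 2-edge-rooted
forest of `G^{A,B}_red`:
(C0) its support is a spanning forest;
(C1) at most one component is `2`-edge-rooted;
(C2) every other component is `0`- or `1`-edge-rooted;
(C3) the parity condition on the path joining the two roots. -/
def Is2ERF (mult : P.Ered → ℕ) : Prop :=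
  IsAcyclic P.endsRed (P.mSupport mult) ∧
  (∀ v : P.Vred, P.compCount mult v ≤ 2) ∧
  (∀ u v : P.Vred, P.compCount mult u = 2 → P.compCount mult v = 2 →
    Reachable P.endsRed (P.mSupport mult) u v) ∧
  (∀ v : P.Vred, P.compCount mult v = 2 → P.C3At mult v)

/-! ### Birooted forests -/

/-- `(F, R)` is a birooted forest of `G^{A,B}_red`:  `F` is a spanning forest,
the root set `R` contains `0̄`, every component of `F` contains at least one
root, no component contains three roots, at most one component contains two
roots, and a component with two roots has one root in `A` and the other in
`Ā ∪ {0̄}`. -/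
def IsBirootedForest (F : Finset P.Ered) (R : Set P.Vred) : Prop :=
  IsAcyclic P.endsRed F ∧
  (⊥ : P.Vred) ∈ R ∧
  (∀ v : P.Vred, ∃ r ∈ R, Reachable P.endsRed F v r) ∧
  (∀ r₁ ∈ R, ∀ r₂ ∈ R, ∀ r₃ ∈ R, r₁ ≠ r₂ → r₁ ≠ r₃ → r₂ ≠ r₃ →
    Reachable P.endsRed F r₁ r₂ → Reachable P.endsRed F r₁ r₃ → False) ∧
  (∀ r₁ ∈ R, ∀ r₂ ∈ R, ∀ r₃ ∈ R, ∀ r₄ ∈ R, r₁ ≠ r₂ → r₃ ≠ r₄ →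
    Reachable P.endsRed F r₁ r₂ → Reachable P.endsRed F r₃ r₄ →
    Reachable P.endsRed F r₁ r₃) ∧
  (∀ r₁ ∈ R, ∀ r₂ ∈ R, r₁ ≠ r₂ → Reachable P.endsRed F r₁ r₂ →
    (P.InA r₁ ∧ ¬ P.InA r₂) ∨ (P.InA r₂ ∧ ¬ P.InA r₁))

/-! ### Internal activity and the edge order -/

/-- `e` is internally passive in the spanning tree `T`:  it can be exchanged
for a strictly smaller edge `f` so that the result is again a spanning tree. -/
def InternallyPassive (ord : LinearOrder P.EB) (T : Finset P.EB) (e : P.EB) : Prop :=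
  e ∈ T ∧ ∃ f : P.EB, ord.lt f e ∧ IsSpanningTree P.endsB (insert f (T.erase e))

/-- `e` is internally active in the spanning tree `T`. -/
def InternallyActive (ord : LinearOrder P.EB) (T : Finset P.EB) (e : P.EB) : Prop :=
  e ∈ T ∧ ¬ ∃ f : P.EB, ord.lt f e ∧ IsSpanningTree P.endsB (insert f (T.erase e))

/-- The number of internally passive edges of `T`. -/
def ipCount (ord : LinearOrder P.EB) (T : Finset P.EB) : ℕ :=
  (T.filter fun e => P.InternallyPassive ord T e).card

/-- The smaller endpoint of an edge of `G^{A,B}`. -/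
def endMin (e : P.EB) : P.W := Sym2.lift ⟨fun a b => a ⊓ b, fun a b => inf_comm a b⟩ (P.endsB e)
/-- The larger endpoint of an edge of `G^{A,B}`. -/
def endMax (e : P.EB) : P.W := Sym2.lift ⟨fun a b => a ⊔ b, fun a b => sup_comm a b⟩ (P.endsB e)

/-- The endpoints of an edge, as an ordered pair in the lexicographic square
of the vertex order `0 < 0̄ < 1 < ⋯ < m < 1̄ < ⋯ < n̄`. -/
def lexEnds (e : P.EB) : P.W ×ₗ P.W := toLex (P.endMin e, P.endMax e)

/-- A linear order on the edges of `G^{A,B}` is admissible if it refines the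
lexicographic order on endpoints (so parallel edges are ordered arbitrarily). -/
def AdmissibleOrder (ord : LinearOrder P.EB) : Prop :=
  ∀ e f : P.EB, P.lexEnds e < P.lexEnds f → ord.lt e f

/-- `v` is a connecting vertex of `T`:  `v ∈ A` and `v` is adjacent to `0` in
`T`, or `v ∈ Ā` and `v` is adjacent to `0̄` in `T`. -/
def ConnVertex (T : Finset P.EB) (v : P.Vred) : Prop :=
  (∃ a : Fin P.m, v = P.liftV (P.aVert a) ∧ P.eA a ∈ T) ∨
  (∃ b : Fin P.n, v = P.liftV (P.bVert b) ∧ P.eB b ∈ T)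

/-- `e` is a connecting edge of `T` (an edge `0a`, `a ∈ A`, or `0̄b`, `b ∈ Ā`)
with connecting vertex `v`. -/
def ConnEdge (T : Finset P.EB) (e : P.EB) (v : P.Vred) : Prop :=
  e ∈ T ∧ ((∃ a : Fin P.m, e = P.eA a ∧ v = P.liftV (P.aVert a)) ∨
           (∃ b : Fin P.n, e = P.eB b ∧ v = P.liftV (P.bVert b)))

/-! ### The h-vector -/

/-- `f_{i-1}`:  the number of acyclic edge sets of cardinality `i` in `G^{A,B}`. -/
def numAcyclic (i : ℕ) : ℕ :=
  Nat.card {F : Finset P.EB // IsAcyclic P.endsB F ∧ F.card = i}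

/-- The rank of the graphic matroid of `G^{A,B}`:  `|V| - 1 = m + n + 1`. -/
def d : ℕ := P.m + P.n + 1

/-- `h` is the h-vector of the graphic matroid of `G^{A,B}`:  it satisfies
`Σ_{i=0}^{d} f_{i-1} (t-1)^{d-i} = Σ_{k=0}^{d} h_k t^{d-k}`. -/
def IsHVector (h : ℕ → ℤ) : Prop :=
  ∑ i ∈ Finset.range (P.d + 1),
      Polynomial.C ((P.numAcyclic i : ℤ)) * (Polynomial.X - 1) ^ (P.d - i)
    = ∑ k ∈ Finset.range (P.d + 1), Polynomial.C (h k) * Polynomial.X ^ (P.d - k)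

end BiconedGraph

/-- `(h 0, …, h d)` is a pure O-sequence:  there is a multicomplex `M` of
multisets on a finite ground set (nonempty, closed under sub-multisets), all
of whose inclusion-maximal members have the same cardinality, whose members
all have cardinality at most `d`, and which has exactly `h i` members of
cardinality `i` for every `i ≤ d`. -/
def IsPureOSeq (d : ℕ) (h : ℕ → ℤ) : Prop :=
  ∃ (N : ℕ) (M : Set (Multiset (Fin N))),
    M.Nonempty ∧
    (∀ s ∈ M, ∀ t : Multiset (Fin N), t ≤ s → t ∈ M) ∧
    (∀ s ∈ M, ∀ t ∈ M, (∀ u ∈ M, s ≤ u → u = s) → (∀ u ∈ M, t ≤ u → u = t) →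
      Multiset.card s = Multiset.card t) ∧
    (∀ s ∈ M, Multiset.card s ≤ d) ∧
    (∀ i ≤ d, (Nat.card {s : Multiset (Fin N) // s ∈ M ∧ Multiset.card s = i} : ℤ) = h i)

/-! ### Auxiliary lemmas for Statement 12 -/

section ReachAux

variable {ε ν : Type} {ends : ε → Sym2 ν}

namespace MWalk

def append : ∀ {u v w : ν}, MWalk ends u v → MWalk ends v w → MWalk ends u w
  | _, _, _, nil _, q => q
  | _, _, _, cons e x h p, q => cons e x h (append p q)

lemma edges_append : ∀ {u v w : ν} (p : MWalk ends u v) (q : MWalk ends v w),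
    (append p q).edges = p.edges ++ q.edges
  | _, _, _, nil _, _ => rfl
  | _, _, _, cons e x h p, q => by
      simp [append, edges, edges_append p q]

def reverse : ∀ {u v : ν}, MWalk ends u v → MWalk ends v u
  | _, _, nil u => nil u
  | _, _, cons e x h p =>
      append (reverse p) (cons e _ (by rw [h, Sym2.eq_swap]) (nil _))

lemma mem_edges_reverse : ∀ {u v : ν} (p : MWalk ends u v) {e : ε},
    e ∈ (reverse p).edges → e ∈ p.edges
  | _, _, nil _, e => by simp [reverse]
  | _, _, cons f x h p, e => by
      intro he
      rw [reverse, edges_append] at he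
      rcases List.mem_append.1 he with h1 | h1
      · exact List.mem_cons_of_mem _ (mem_edges_reverse p h1)
      · simp only [edges] at h1 ⊢
        simp only [List.mem_singleton] at h1
        simp [h1]

end MWalk

lemma reach_refl (F : Finset ε) (u : ν) : Reachable ends F u u :=
  ⟨MWalk.nil u, fun e he => by simp [MWalk.edges] at he⟩

lemma reach_symm {F : Finset ε} {u v : ν} (h : Reachable ends F u v) :
    Reachable ends F v u := by
  obtain ⟨p, hp⟩ := h
  exact ⟨p.reverse, fun e he => hp e (MWalk.mem_edges_reverse p he)⟩

lemma reach_trans {F : Finset ε} {u v w : ν} :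
    Reachable ends F u v → Reachable ends F v w → Reachable ends F u w
  | ⟨p, hp⟩, ⟨q, hq⟩ =>
    ⟨p.append q, fun e he => by
      rcases List.mem_append.1 (by rwa [MWalk.edges_append] at he) with h | h
      exacts [hp e h, hq e h]⟩

lemma reach_mono {F F' : Finset ε} (hFF : F ⊆ F') {u v : ν} :
    Reachable ends F u v → Reachable ends F' u v
  | ⟨p, hp⟩ => ⟨p, fun e he => hFF (hp e he)⟩

lemma reach_single {F : Finset ε} {g : ε} (hg : g ∈ F) {a b : ν}
    (h : ends g = s(a, b)) : Reachable ends F a b :=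
  ⟨MWalk.cons g b h (MWalk.nil b), fun e he => by
    simp only [MWalk.edges, List.mem_singleton] at he
    subst he; exact hg⟩

lemma reach_insert [DecidableEq ε] {F : Finset ε} {f : ε} {p q : ν}
    (hf : ends f = s(p, q)) {u v : ν} :
    Reachable ends (insert f F) u v ↔
      Reachable ends F u v ∨ (Reachable ends F u p ∧ Reachable ends F q v) ∨
        (Reachable ends F u q ∧ Reachable ends F p v) := by
  constructor
  · suffices H : ∀ {u v : ν} (w : MWalk ends u v), w.edgesIn (insert f F) →
        (Reachable ends F u v ∨ (Reachable ends F u p ∧ Reachable ends F q v) ∨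
          (Reachable ends F u q ∧ Reachable ends F p v)) by
      rintro ⟨w, hw⟩; exact H w hw
    intro u v w
    induction w with
    | nil => exact fun _ => Or.inl (reach_refl F _)
    | @cons a b g x h w ih =>
      intro hw
      have hg : g ∈ insert f F := hw g (by simp [MWalk.edges])
      have hw' : w.edgesIn (insert f F) := fun e he =>
        hw e (by simp only [MWalk.edges, List.mem_cons]; exact Or.inr he)
      rcases Finset.mem_insert.1 hg with rfl | hgF
      · rcases Sym2.eq_iff.1 (hf.symm.trans h) with ⟨rfl, rfl⟩ | ⟨rfl, rfl⟩
        · rcases ih hw' with h1 | ⟨h1, h2⟩ | ⟨h1, h2⟩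
          · exact Or.inr (Or.inl ⟨reach_refl F _, h1⟩)
          · exact Or.inl (reach_trans (reach_symm h1) h2)
          · exact Or.inl h2
        · rcases ih hw' with h1 | ⟨h1, h2⟩ | ⟨h1, h2⟩
          · exact Or.inr (Or.inr ⟨reach_refl F _, h1⟩)
          · exact Or.inl h2
          · exact Or.inl (reach_trans (reach_symm h1) h2)
      · have hstep := reach_single hgF h
        rcases ih hw' with h1 | ⟨h1, h2⟩ | ⟨h1, h2⟩
        · exact Or.inl (reach_trans hstep h1)
        · exact Or.inr (Or.inl ⟨reach_trans hstep h1, h2⟩)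
        · exact Or.inr (Or.inr ⟨reach_trans hstep h1, h2⟩)
  · have hstep : Reachable ends (insert f F) p q :=
      reach_single (Finset.mem_insert_self f F) hf
    have hmono : ∀ {a b : ν}, Reachable ends F a b → Reachable ends (insert f F) a b :=
      fun h => reach_mono (Finset.subset_insert f F) h
    rintro (h | ⟨h1, h2⟩ | ⟨h1, h2⟩)
    · exact hmono h
    · exact reach_trans (hmono h1) (reach_trans hstep (hmono h2))
    · exact reach_trans (hmono h1) (reach_trans (reach_symm hstep) (hmono h2))

lemma reach_map {ε' ν' : Type} {ends' : ε' → Sym2 ν'}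
    (φ : ν → ν') (ψ : ε → ε') (hcomm : ∀ g, ends' (ψ g) = (ends g).map φ)
    {F : Finset ε} {F' : Finset ε'} (hsub : ∀ g ∈ F, ψ g ∈ F')
    {u w : ν} (h : Reachable ends F u w) : Reachable ends' F' (φ u) (φ w) := by
  obtain ⟨p, hp⟩ := h
  revert hp
  induction p with
  | nil => exact fun _ => reach_refl _ _
  | cons g x hgx p ih =>
    intro hp
    have h1 : g ∈ F := hp g (by simp [MWalk.edges])
    have h2 : p.edgesIn F := fun e he =>
      hp e (by simp only [MWalk.edges, List.mem_cons]; exact Or.inr he)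
    exact reach_trans
      (reach_single (hsub g h1) (by rw [hcomm, hgx, Sym2.map_pair_eq]))
      (ih h2)

lemma exchange_aux [DecidableEq ε] {F : Finset ε} {g : ε} {u' w' x y p q : ν}
    (hg : ends g = s(u', w'))
    (hxy : ¬ Reachable ends (insert g F) x y)
    (hxp : Reachable ends (insert g F) x p) (hyq : Reachable ends (insert g F) y q)
    (hup : Reachable ends F u' p) (hqw : Reachable ends F q w')
    (huw : ¬ Reachable ends F u' w') : False := by
  have hmono : ∀ {a b : ν}, Reachable ends F a b → Reachable ends (insert g F) a b :=
    fun h => reach_mono (Finset.subset_insert g F) h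
  have hstep : Reachable ends (insert g F) u' w' :=
    reach_single (Finset.mem_insert_self g F) hg
  have Hx : Reachable ends F x u' ∨ Reachable ends F x w' := by
    rcases (reach_insert hg).1 hxp with h | ⟨h1, h2⟩ | ⟨h1, h2⟩
    · exact Or.inl (reach_trans h (reach_symm hup))
    · exact Or.inl h1
    · exact Or.inr h1
  have Hy : Reachable ends F y u' ∨ Reachable ends F y w' := by
    rcases (reach_insert hg).1 hyq with h | ⟨h1, h2⟩ | ⟨h1, h2⟩
    · exact Or.inr (reach_trans h hqw)
    · exact Or.inl h1
    · exact Or.inr h1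
  rcases Hx with hx | hx <;> rcases Hy with hy | hy
  · exact hxy (reach_trans (hmono hx) (reach_symm (hmono hy)))
  · exact hxy (reach_trans (hmono hx) (reach_trans hstep (reach_symm (hmono hy))))
  · exact hxy (reach_trans (hmono hx) (reach_trans (reach_symm hstep) (reach_symm (hmono hy))))
  · exact hxy (reach_trans (hmono hx) (reach_symm (hmono hy)))

lemma spanningTree_exchange [DecidableEq ε] {T : Finset ε}
    (hT : IsSpanningTree ends T) {e : ε} (he : e ∈ T) {x y : ν}
    (hxy : ends e = s(x, y)) {f : ε} {p q : ν} (hf : ends f = s(p, q))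
    (hxp : Reachable ends (T.erase e) x p) (hyq : Reachable ends (T.erase e) y q) :
    IsSpanningTree ends (insert f (T.erase e)) := by
  by_cases hfe : f = e
  · subst hfe; rw [Finset.insert_erase he]; exact hT
  have hnxy : ¬ Reachable ends (T.erase e) x y := hT.1 e he x y hxy
  have hfS : f ∉ T.erase e := fun hfS =>
    hnxy (reach_trans hxp (reach_trans (reach_single hfS hf) (reach_symm hyq)))
  constructor
  · intro g hg u' w' hguw
    rcases Finset.mem_insert.1 hg with rfl | hgS
    · rw [Finset.erase_insert hfS]
      intro hr
      rcases Sym2.eq_iff.1 (hf.symm.trans hguw) with ⟨h1, h2⟩ | ⟨h1, h2⟩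
      · subst h1; subst h2
        exact hnxy (reach_trans hxp (reach_trans hr (reach_symm hyq)))
      · subst h1; subst h2
        exact hnxy (reach_trans hxp (reach_trans (reach_symm hr) (reach_symm hyq)))
    · have hgf : f ≠ g := fun h => hfS (h ▸ hgS)
      rw [Finset.erase_insert_of_ne hgf]
      intro hr
      have hSg : insert g ((T.erase e).erase g) = T.erase e := Finset.insert_erase hgS
      have hTg : (T.erase e).erase g ⊆ T.erase g := by
        intro t ht
        rcases Finset.mem_erase.1 ht with ⟨h1, h2⟩
        exact Finset.mem_erase.2 ⟨h1, Finset.mem_of_mem_erase h2⟩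
      have hnuw : ¬ Reachable ends ((T.erase e).erase g) u' w' := fun h =>
        hT.1 g (Finset.mem_of_mem_erase hgS) u' w' hguw (reach_mono hTg h)
      have hxp' : Reachable ends (insert g ((T.erase e).erase g)) x p := by rw [hSg]; exact hxp
      have hyq' : Reachable ends (insert g ((T.erase e).erase g)) y q := by rw [hSg]; exact hyq
      have hnxy' : ¬ Reachable ends (insert g ((T.erase e).erase g)) x y := by
        rw [hSg]; exact hnxy
      rcases (reach_insert hf).1 hr with h | ⟨h1, h2⟩ | ⟨h1, h2⟩
      · exact hnuw h
      · exact exchange_aux hguw hnxy' hxp' hyq' h1 h2 hnuw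
      · exact exchange_aux hguw (fun h => hnxy' (reach_symm h)) hyq' hxp' h1 h2 hnuw
  · intro u w
    have h0 := hT.2 u w
    rw [← Finset.insert_erase he] at h0
    have hmono : ∀ {a b : ν}, Reachable ends (T.erase e) a b →
        Reachable ends (insert f (T.erase e)) a b :=
      fun h => reach_mono (Finset.subset_insert f (T.erase e)) h
    have key : Reachable ends (insert f (T.erase e)) x y :=
      reach_trans (hmono hxp)
        (reach_trans (reach_single (Finset.mem_insert_self f _) hf)
          (reach_symm (hmono hyq)))
    rcases (reach_insert hxy).1 h0 with h | ⟨h1, h2⟩ | ⟨h1, h2⟩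
    · exact hmono h
    · exact reach_trans (hmono h1) (reach_trans key (hmono h2))
    · exact reach_trans (hmono h1) (reach_trans (reach_symm key) (hmono h2))

lemma sym2_exists_rep {α : Type} (s : Sym2 α) : ∃ a b, s = s(a, b) :=
  Sym2.ind (fun a b => ⟨a, b, rfl⟩) s

end ReachAux
namespace BiconedGraph

variable (P : BiconedGraph)

lemma liftW_injective : Function.Injective P.liftW := fun a b h =>
  WithBot.coe_injective h

lemma liftV_injective : Function.Injective P.liftV := fun a b h =>
  WithBot.coe_injective h

lemma liftW_ne_bot (x : P.Vred) : P.liftW x ≠ ⊥ := WithBot.coe_ne_bot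

lemma liftV_ne_bot (x : P.VG) : P.liftV x ≠ ⊥ := WithBot.coe_ne_bot

lemma aVert_injective : Function.Injective P.aVert := fun a b h => by
  simpa [aVert] using h

lemma bVert_injective : Function.Injective P.bVert := fun a b h => by
  simpa [bVert] using h

lemma aVert_ne_bVert (a : Fin P.m) (b : Fin P.n) : P.aVert a ≠ P.bVert b := by
  simp [aVert, bVert]

lemma endsB_e00 : P.endsB P.e00 = s((⊥ : P.W), P.liftW ⊥) := rfl

lemma endsB_eA (a : Fin P.m) :
    P.endsB (P.eA a) = s((⊥ : P.W), P.liftW (P.liftV (P.aVert a))) := rfl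

lemma endsB_eB (b : Fin P.n) :
    P.endsB (P.eB b) = s(P.liftW ⊥, P.liftW (P.liftV (P.bVert b))) := rfl

lemma endsB_eS (a : {a : Fin P.m // a ∈ P.S}) :
    P.endsB (P.eS a) = s(P.liftW ⊥, P.liftW (P.liftV (P.aVert a.1))) := rfl

lemma endsB_eG (g : P.E) :
    P.endsB (P.eG g) = (P.ends g).map fun x => P.liftW (P.liftV x) := rfl

lemma mem_redOf {T : Finset P.EB} {g : P.Ered} :
    g ∈ P.redOf T ↔ P.redToEB g ∈ T := by
  simp [redOf]

lemma reach_red_lift {T : Finset P.EB} {e : P.EB}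
    (hne : ∀ g : P.Ered, P.redToEB g ≠ e) {u w : P.Vred}
    (h : Reachable P.endsRed (P.redOf T) u w) :
    Reachable P.endsB (T.erase e) (P.liftW u) (P.liftW w) := by
  refine reach_map P.liftW P.redToEB ?_ ?_ h
  · intro g
    cases g with
    | inl a =>
      show P.endsB (P.eS a) = _
      rw [P.endsB_eS]
      show _ = Sym2.map _ s((⊥ : P.Vred), P.liftV (P.aVert a.1))
      rw [Sym2.map_pair_eq]
    | inr g' =>
      show P.endsB (P.eG g') = _
      rw [P.endsB_eG]
      show _ = Sym2.map _ ((P.ends g').map P.liftV)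
      rw [Sym2.map_map]
      rfl
  · intro g hg
    exact Finset.mem_erase.2 ⟨hne g, (P.mem_redOf).1 hg⟩

lemma lexEnds_eq {f : P.EB} {c d : P.W} (h : P.endsB f = s(c, d)) :
    P.lexEnds f = toLex (c ⊓ d, c ⊔ d) := by
  simp [lexEnds, endMin, endMax, h, Sym2.lift_mk]

lemma lexEnds_e00' : P.lexEnds P.e00 = toLex ((⊥ : P.W), P.liftW ⊥) := by
  rw [P.lexEnds_eq (P.endsB_e00)]
  simp

lemma lexEnds_eA' (a : Fin P.m) :
    P.lexEnds (P.eA a) = toLex ((⊥ : P.W), P.liftW (P.liftV (P.aVert a))) := by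
  rw [P.lexEnds_eq (P.endsB_eA a)]
  simp

lemma lexEnds_eB' (b : Fin P.n) :
    P.lexEnds (P.eB b) = toLex (P.liftW ⊥, P.liftW (P.liftV (P.bVert b))) := by
  have hle : P.liftW ⊥ ≤ P.liftW (P.liftV (P.bVert b)) := WithBot.coe_le_coe.2 bot_le
  rw [P.lexEnds_eq (P.endsB_eB b), inf_eq_left.2 hle, sup_eq_right.2 hle]

lemma lexEnds_eS' (a : {a : Fin P.m // a ∈ P.S}) :
    P.lexEnds (P.eS a) = toLex (P.liftW ⊥, P.liftW (P.liftV (P.aVert a.1))) := by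
  have hle : P.liftW ⊥ ≤ P.liftW (P.liftV (P.aVert a.1)) := WithBot.coe_le_coe.2 bot_le
  rw [P.lexEnds_eq (P.endsB_eS a), inf_eq_left.2 hle, sup_eq_right.2 hle]

/-- Key structural lemma: when the component `C` of `v` in `T \ T₀` contains no
connecting vertex other than `v` and does not contain `0̄`, every vertex of
`G^{A,B}` reachable from a lifted vertex of `C` in `T \ e` is a lifted vertex
of `C`. -/
lemma comp_char {T : Finset P.EB} {e : P.EB} {v : P.Vred}
    (hce : P.ConnEdge T e v)
    (honly : ∀ u : P.Vred, Reachable P.endsRed (P.redOf T) v u →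
      P.ConnVertex T u → u = v)
    (hbot : ¬ Reachable P.endsRed (P.redOf T) v ⊥) :
    ∀ {s w : P.W} (p : MWalk P.endsB s w), p.edgesIn (T.erase e) →
      ∀ u₀ : P.Vred, s = P.liftW u₀ → Reachable P.endsRed (P.redOf T) v u₀ →
      ∃ u₁ : P.Vred, Reachable P.endsRed (P.redOf T) v u₁ ∧ w = P.liftW u₁ := by
  intro s w p
  induction p with
  | nil => exact fun _ u₀ hs hu => ⟨u₀, hu, hs⟩
  | @cons s x g x' hgx p ih =>
    intro hp u₀ hs hu
    have hgT : g ∈ T.erase e := hp g (by simp [MWalk.edges])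
    have hgne : g ≠ e := (Finset.mem_erase.1 hgT).1
    have hgT' : g ∈ T := (Finset.mem_erase.1 hgT).2
    have hp' : p.edgesIn (T.erase e) := fun e' he =>
      hp e' (by simp only [MWalk.edges, List.mem_cons]; exact Or.inr he)
    subst hs
    suffices hstep : ∃ u' : P.Vred,
        Reachable P.endsRed (P.redOf T) v u' ∧ x' = P.liftW u' by
      obtain ⟨u', hu', hx⟩ := hstep
      exact ih hp' u' hx hu'
    rcases g with ⟨⟩ | a' | b' | s' | g'
    · -- e00
      rw [P.endsB_e00] at hgx
      rcases Sym2.eq_iff.1 hgx with ⟨h1, h2⟩ | ⟨h1, h2⟩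
      · exact absurd h1.symm (P.liftW_ne_bot u₀)
      · exfalso
        have hu0 : u₀ = (⊥ : P.Vred) := (P.liftW_injective h2).symm
        exact hbot (hu0 ▸ hu)
    · -- eA a'
      rw [P.endsB_eA] at hgx
      rcases Sym2.eq_iff.1 hgx with ⟨h1, h2⟩ | ⟨h1, h2⟩
      · exact absurd h1.symm (P.liftW_ne_bot u₀)
      · exfalso
        have hu0 : u₀ = P.liftV (P.aVert a') := (P.liftW_injective h2).symm
        have hcv : P.ConnVertex T u₀ := Or.inl ⟨a', hu0, hgT'⟩
        have huv : u₀ = v := honly u₀ hu hcv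
        rcases hce.2 with ⟨a₀, he₀, hv₀⟩ | ⟨b₀, he₀, hv₀⟩
        · have : a' = a₀ := P.aVert_injective (P.liftV_injective (by
            rw [← hu0, huv, hv₀]))
          exact hgne (by rw [he₀, this])
        · exact P.aVert_ne_bVert a' b₀ (P.liftV_injective (by rw [← hu0, huv, hv₀]))
    · -- eB b'
      rw [P.endsB_eB] at hgx
      rcases Sym2.eq_iff.1 hgx with ⟨h1, h2⟩ | ⟨h1, h2⟩
      · exfalso
        have hu0 : u₀ = (⊥ : P.Vred) := (P.liftW_injective h1).symm
        exact hbot (hu0 ▸ hu)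
      · exfalso
        have hu0 : u₀ = P.liftV (P.bVert b') := (P.liftW_injective h2).symm
        have hcv : P.ConnVertex T u₀ := Or.inr ⟨b', hu0, hgT'⟩
        have huv : u₀ = v := honly u₀ hu hcv
        rcases hce.2 with ⟨a₀, he₀, hv₀⟩ | ⟨b₀, he₀, hv₀⟩
        · exact P.aVert_ne_bVert a₀ b' (P.liftV_injective (by rw [← hv₀, ← huv, hu0]))
        · have : b' = b₀ := P.bVert_injective (P.liftV_injective (by
            rw [← hu0, huv, hv₀]))
          exact hgne (by rw [he₀, this])
    · -- eS s'
      rw [P.endsB_eS] at hgx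
      have hmem : (Sum.inl s' : P.Ered) ∈ P.redOf T := (P.mem_redOf).2 hgT'
      rcases Sym2.eq_iff.1 hgx with ⟨h1, h2⟩ | ⟨h1, h2⟩
      · exfalso
        have hu0 : u₀ = (⊥ : P.Vred) := (P.liftW_injective h1).symm
        exact hbot (hu0 ▸ hu)
      · exfalso
        have hu0 : u₀ = P.liftV (P.aVert s'.1) := (P.liftW_injective h2).symm
        have hend : P.endsRed (Sum.inl s') = s(u₀, (⊥ : P.Vred)) := by
          show s((⊥ : P.Vred), P.liftV (P.aVert s'.1)) = _
          rw [hu0, Sym2.eq_swap]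
        exact hbot (reach_trans hu (reach_single hmem hend))
    · -- eG g'
      rw [P.endsB_eG] at hgx
      have hmem : (Sum.inr g' : P.Ered) ∈ P.redOf T := (P.mem_redOf).2 hgT'
      obtain ⟨z₁, z₂, hz⟩ := sym2_exists_rep (P.ends g')
      rw [hz, Sym2.map_pair_eq] at hgx
      have hendsRed : P.endsRed (Sum.inr g') = s(P.liftV z₁, P.liftV z₂) := by
        show (P.ends g').map P.liftV = _
        rw [hz, Sym2.map_pair_eq]
      rcases Sym2.eq_iff.1 hgx with ⟨h1, h2⟩ | ⟨h1, h2⟩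
      · refine ⟨P.liftV z₂, ?_, h2.symm⟩
        refine reach_trans hu (reach_single hmem ?_)
        rw [hendsRed, ← P.liftW_injective h1]
      · refine ⟨P.liftV z₁, ?_, h1.symm⟩
        refine reach_trans hu (reach_symm (reach_single hmem ?_))
        rw [hendsRed, ← P.liftW_injective h2]

end BiconedGraph

/-- Let `T` be a spanning tree of `G^{A,B}` and `e` a
connecting edge of `T` with connecting vertex `v` such that the component `C`
of `v` in `T \\ T₀` contains no connecting vertex other than `v`.  Then `e` is
internally active in `T` iff `v` is the smallest vertex of `C`. -/
theorem connEdge_active_iff_smallest (P : BiconedGraph)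
    (ord : LinearOrder P.EB) (hord : P.AdmissibleOrder ord)
    (T : Finset P.EB) (hT : IsSpanningTree P.endsB T)
    (e : P.EB) (v : P.Vred) (hce : P.ConnEdge T e v)
    (honly : ∀ u : P.Vred, Reachable P.endsRed (P.redOf T) v u →
      P.ConnVertex T u → u = v) :
    P.InternallyActive ord T e ↔
      (∀ u : P.Vred, Reachable P.endsRed (P.redOf T) v u → v ≤ u) := by
  letI := ord
  obtain ⟨heT, hor⟩ := hce
  have hne_e : ∀ g : P.Ered, P.redToEB g ≠ e := by
    intro g
    rcases hor with ⟨a, he', _⟩ | ⟨b, he', _⟩ <;> rw [he'] <;>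
      rcases g with a' | g' <;> simp [BiconedGraph.redToEB]
  have hredlift : ∀ {u w : P.Vred}, Reachable P.endsRed (P.redOf T) u w →
      Reachable P.endsB (T.erase e) (P.liftW u) (P.liftW w) :=
    fun h => P.reach_red_lift hne_e h
  rcases hor with ⟨a, rfl, rfl⟩ | ⟨b, rfl, rfl⟩
  · -- e = eA a, v the vertex a ∈ A
    constructor
    · -- active → minimal
      rintro ⟨-, hno⟩ u huC
      by_contra hvu
      refine hno ?_
      rcases u with _ | z
      · refine ⟨P.e00, hord _ _ ?_, ?_⟩
        · rw [P.lexEnds_e00', P.lexEnds_eA']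
          exact Prod.Lex.lt_iff.2 (Or.inr ⟨rfl,
            WithBot.coe_lt_coe.2 (WithBot.bot_lt_coe _)⟩)
        · exact spanningTree_exchange hT heT (P.endsB_eA a) P.endsB_e00
            (reach_refl _ _) (hredlift huC)
      · rcases hz : ofLex z with a' | b'
        · have hzz : z = P.aVert a' := by
            have h' : toLex (ofLex z) = toLex (Sum.inl a') := by rw [hz]
            simpa [BiconedGraph.aVert] using h'
          subst hzz
          have haa : a' < a := Sum.Lex.inl_lt_inl_iff.1
            (WithBot.coe_lt_coe.1 (not_le.1 hvu))
          refine ⟨P.eA a', hord _ _ ?_, ?_⟩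
          · rw [P.lexEnds_eA', P.lexEnds_eA']
            exact Prod.Lex.lt_iff.2 (Or.inr ⟨rfl,
              WithBot.coe_lt_coe.2 (WithBot.coe_lt_coe.2
                (Sum.Lex.inl_lt_inl_iff.2 haa))⟩)
          · exact spanningTree_exchange hT heT (P.endsB_eA a) (P.endsB_eA a')
              (reach_refl _ _) (hredlift huC)
        · have hzz : z = P.bVert b' := by
            have h' : toLex (ofLex z) = toLex (Sum.inr b') := by rw [hz]
            simpa [BiconedGraph.bVert] using h'
          subst hzz
          exact absurd (le_of_lt (WithBot.coe_lt_coe.2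
            (Sum.Lex.inl_lt_inr a b'))) hvu
    · -- minimal → active
      intro hmin
      refine ⟨heT, ?_⟩
      rintro ⟨f, hflt, hfT'⟩
      have hbot : ¬ Reachable P.endsRed (P.redOf T) (P.liftV (P.aVert a)) ⊥ := fun h =>
        P.liftV_ne_bot (P.aVert a) (le_bot_iff.1 (hmin ⊥ h))
      have hK : ∀ {w : P.W},
          Reachable P.endsB (T.erase (P.eA a)) (P.liftW (P.liftV (P.aVert a))) w →
          ∃ u₁, Reachable P.endsRed (P.redOf T) (P.liftV (P.aVert a)) u₁ ∧
            w = P.liftW u₁ := by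
        rintro w ⟨p, hp⟩
        exact P.comp_char ⟨heT, Or.inl ⟨a, rfl, rfl⟩⟩ honly hbot p hp _ rfl (reach_refl _ _)
      have hconn : Reachable P.endsB (insert f (T.erase (P.eA a)))
          (⊥ : P.W) (P.liftW (P.liftV (P.aVert a))) := hfT'.2 _ _
      have hnxy : ¬ Reachable P.endsB (T.erase (P.eA a)) (⊥ : P.W)
          (P.liftW (P.liftV (P.aVert a))) := hT.1 _ heT _ _ (P.endsB_eA a)
      rcases f with ⟨⟩ | a' | b' | s' | g'
      · rcases (reach_insert P.endsB_e00).1 hconn with h | ⟨h1, h2⟩ | ⟨h1, h2⟩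
        · exact hnxy h
        · obtain ⟨u₁, hu₁, hw⟩ := hK (reach_symm h2)
          exact hbot (by rw [← P.liftW_injective hw] at hu₁; exact hu₁)
        · obtain ⟨u₁, -, hw⟩ := hK (reach_symm h2)
          exact P.liftW_ne_bot u₁ hw.symm
      · rcases lt_trichotomy a' a with haa | rfl | haa
        · rcases (reach_insert (P.endsB_eA a')).1 hconn with h | ⟨h1, h2⟩ | ⟨h1, h2⟩
          · exact hnxy h
          · obtain ⟨u₁, hu₁, hw⟩ := hK (reach_symm h2)
            have hle := hmin u₁ hu₁
            rw [← P.liftW_injective hw] at hle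
            exact absurd hle (not_le.2 (WithBot.coe_lt_coe.2
              (Sum.Lex.inl_lt_inl_iff.2 haa)))
          · obtain ⟨u₁, -, hw⟩ := hK (reach_symm h2)
            exact P.liftW_ne_bot u₁ hw.symm
        · exact absurd hflt (lt_irrefl _)
        · refine absurd hflt (lt_asymm (hord _ _ ?_))
          rw [P.lexEnds_eA', P.lexEnds_eA']
          exact Prod.Lex.lt_iff.2 (Or.inr ⟨rfl,
            WithBot.coe_lt_coe.2 (WithBot.coe_lt_coe.2
              (Sum.Lex.inl_lt_inl_iff.2 haa))⟩)
      · refine absurd hflt (lt_asymm (hord _ _ ?_))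
        rw [P.lexEnds_eA', P.lexEnds_eB']
        exact Prod.Lex.lt_iff.2 (Or.inl (WithBot.bot_lt_coe _))
      · refine absurd hflt (lt_asymm (hord _ _ ?_))
        rw [P.lexEnds_eA', P.lexEnds_eS']
        exact Prod.Lex.lt_iff.2 (Or.inl (WithBot.bot_lt_coe _))
      · obtain ⟨z₁, z₂, hz⟩ := sym2_exists_rep (P.ends g')
        refine absurd hflt (lt_asymm (hord _ _ ?_))
        rw [P.lexEnds_eA', P.lexEnds_eq (c := P.liftW (P.liftV z₁))
          (d := P.liftW (P.liftV z₂)) (by rw [P.endsB_eG, hz, Sym2.map_pair_eq])]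
        refine Prod.Lex.lt_iff.2 (Or.inl ?_)
        show (⊥ : P.W) < (P.liftV z₁ : P.Vred) ⊓ (P.liftV z₂ : P.Vred)
        exact WithBot.bot_lt_coe _
  · -- e = eB b, v the vertex b̄ ∈ Ā
    constructor
    · rintro ⟨-, hno⟩ u huC
      by_contra hvu
      by_cases hbotC : Reachable P.endsRed (P.redOf T) (P.liftV (P.bVert b)) ⊥
      · exact hT.1 _ heT _ _ (P.endsB_eB b) (reach_symm (hredlift hbotC))
      have hK : ∀ {w : P.W},
          Reachable P.endsB (T.erase (P.eB b)) (P.liftW (P.liftV (P.bVert b))) w →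
          ∃ u₁, Reachable P.endsRed (P.redOf T) (P.liftV (P.bVert b)) u₁ ∧
            w = P.liftW u₁ := by
        rintro w ⟨p, hp⟩
        exact P.comp_char ⟨heT, Or.inr ⟨b, rfl, rfl⟩⟩ honly hbotC p hp _ rfl (reach_refl _ _)
      refine hno ?_
      rcases u with _ | z
      · exact absurd huC hbotC
      rcases hz : ofLex z with a' | b'
      · have hzz : z = P.aVert a' := by
          have h' : toLex (ofLex z) = toLex (Sum.inl a') := by rw [hz]
          simpa [BiconedGraph.aVert] using h'
        subst hzz
        have hxp : Reachable P.endsB (T.erase (P.eB b)) (P.liftW ⊥) (⊥ : P.W) := by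
          have h00 := hT.2 (⊥ : P.W) (P.liftW ⊥)
          rw [← Finset.insert_erase heT] at h00
          rcases (reach_insert (P.endsB_eB b)).1 h00 with h | ⟨h1, h2⟩ | ⟨h1, h2⟩
          · exact reach_symm h
          · exact reach_symm h1
          · exfalso
            obtain ⟨u₁, -, hw⟩ := hK (reach_symm h1)
            exact P.liftW_ne_bot u₁ hw.symm
        refine ⟨P.eA a', hord _ _ ?_, ?_⟩
        · rw [P.lexEnds_eA', P.lexEnds_eB']
          exact Prod.Lex.lt_iff.2 (Or.inl (WithBot.bot_lt_coe _))
        · exact spanningTree_exchange hT heT (P.endsB_eB b) (P.endsB_eA a')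
            hxp (hredlift huC)
      · have hzz : z = P.bVert b' := by
          have h' : toLex (ofLex z) = toLex (Sum.inr b') := by rw [hz]
          simpa [BiconedGraph.bVert] using h'
        subst hzz
        have hbb : b' < b := Sum.Lex.inr_lt_inr_iff.1
          (WithBot.coe_lt_coe.1 (not_le.1 hvu))
        refine ⟨P.eB b', hord _ _ ?_, ?_⟩
        · rw [P.lexEnds_eB', P.lexEnds_eB']
          exact Prod.Lex.lt_iff.2 (Or.inr ⟨rfl,
            WithBot.coe_lt_coe.2 (WithBot.coe_lt_coe.2
              (Sum.Lex.inr_lt_inr_iff.2 hbb))⟩)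
        · exact spanningTree_exchange hT heT (P.endsB_eB b) (P.endsB_eB b')
            (reach_refl _ _) (hredlift huC)
    · intro hmin
      refine ⟨heT, ?_⟩
      rintro ⟨f, hflt, hfT'⟩
      have hbot : ¬ Reachable P.endsRed (P.redOf T) (P.liftV (P.bVert b)) ⊥ := fun h =>
        P.liftV_ne_bot (P.bVert b) (le_bot_iff.1 (hmin ⊥ h))
      have hK : ∀ {w : P.W},
          Reachable P.endsB (T.erase (P.eB b)) (P.liftW (P.liftV (P.bVert b))) w →
          ∃ u₁, Reachable P.endsRed (P.redOf T) (P.liftV (P.bVert b)) u₁ ∧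
            w = P.liftW u₁ := by
        rintro w ⟨p, hp⟩
        exact P.comp_char ⟨heT, Or.inr ⟨b, rfl, rfl⟩⟩ honly hbot p hp _ rfl (reach_refl _ _)
      have hconn : Reachable P.endsB (insert f (T.erase (P.eB b)))
          (P.liftW ⊥) (P.liftW (P.liftV (P.bVert b))) := hfT'.2 _ _
      have hnxy : ¬ Reachable P.endsB (T.erase (P.eB b)) (P.liftW ⊥)
          (P.liftW (P.liftV (P.bVert b))) := hT.1 _ heT _ _ (P.endsB_eB b)
      rcases f with ⟨⟩ | a' | b' | s' | g'
      · rcases (reach_insert P.endsB_e00).1 hconn with h | ⟨h1, h2⟩ | ⟨h1, h2⟩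
        · exact hnxy h
        · obtain ⟨u₁, hu₁, hw⟩ := hK (reach_symm h2)
          exact hbot (by rw [← P.liftW_injective hw] at hu₁; exact hu₁)
        · obtain ⟨u₁, -, hw⟩ := hK (reach_symm h2)
          exact P.liftW_ne_bot u₁ hw.symm
      · rcases (reach_insert (P.endsB_eA a')).1 hconn with h | ⟨h1, h2⟩ | ⟨h1, h2⟩
        · exact hnxy h
        · obtain ⟨u₁, hu₁, hw⟩ := hK (reach_symm h2)
          have hle := hmin u₁ hu₁
          rw [← P.liftW_injective hw] at hle
          exact absurd hle (not_le.2 (WithBot.coe_lt_coe.2 (Sum.Lex.inl_lt_inr _ _)))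
        · obtain ⟨u₁, -, hw⟩ := hK (reach_symm h2)
          exact P.liftW_ne_bot u₁ hw.symm
      · rcases lt_trichotomy b' b with hbb | rfl | hbb
        · rcases (reach_insert (P.endsB_eB b')).1 hconn with h | ⟨h1, h2⟩ | ⟨h1, h2⟩
          · exact hnxy h
          · obtain ⟨u₁, hu₁, hw⟩ := hK (reach_symm h2)
            have hle := hmin u₁ hu₁
            rw [← P.liftW_injective hw] at hle
            exact absurd hle (not_le.2 (WithBot.coe_lt_coe.2
              (Sum.Lex.inr_lt_inr_iff.2 hbb)))
          · obtain ⟨u₁, hu₁, hw⟩ := hK (reach_symm h2)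
            exact hbot (by rw [← P.liftW_injective hw] at hu₁; exact hu₁)
        · exact absurd hflt (lt_irrefl _)
        · refine absurd hflt (lt_asymm (hord _ _ ?_))
          rw [P.lexEnds_eB', P.lexEnds_eB']
          exact Prod.Lex.lt_iff.2 (Or.inr ⟨rfl,
            WithBot.coe_lt_coe.2 (WithBot.coe_lt_coe.2
              (Sum.Lex.inr_lt_inr_iff.2 hbb))⟩)
      · rcases (reach_insert (P.endsB_eS s')).1 hconn with h | ⟨h1, h2⟩ | ⟨h1, h2⟩
        · exact hnxy h
        · obtain ⟨u₁, hu₁, hw⟩ := hK (reach_symm h2)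
          have hle := hmin u₁ hu₁
          rw [← P.liftW_injective hw] at hle
          exact absurd hle (not_le.2 (WithBot.coe_lt_coe.2 (Sum.Lex.inl_lt_inr _ _)))
        · obtain ⟨u₁, hu₁, hw⟩ := hK (reach_symm h2)
          exact hbot (by rw [← P.liftW_injective hw] at hu₁; exact hu₁)
      · obtain ⟨z₁, z₂, hz⟩ := sym2_exists_rep (P.ends g')
        refine absurd hflt (lt_asymm (hord _ _ ?_))
        rw [P.lexEnds_eB', P.lexEnds_eq (c := P.liftW (P.liftV z₁))
          (d := P.liftW (P.liftV z₂)) (by rw [P.endsB_eG, hz, Sym2.map_pair_eq])]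
        refine Prod.Lex.lt_iff.2 (Or.inl ?_)
        show ((⊥ : P.Vred) : P.W) < (P.liftV z₁ : P.Vred) ⊓ (P.liftV z₂ : P.Vred)
        refine WithBot.coe_lt_coe.2 ?_
        show (⊥ : P.Vred) < (z₁ : P.VG) ⊓ (z₂ : P.VG)
        exact WithBot.bot_lt_coe _

end

end BiconedPaper
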